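/- Let F be a perfect field, let A be a commutative associative unital F-algebra, and let V be a finite-dimensional uniserial A-module of composition length ℓ. Then there exists x ∈ A such that V is a uniserial F[x]-module; moreover, the minimal polynomial of the action of x on V equals p^ℓ for some monic irreducible polynomial p ∈ F[X] with ℓ·deg(p) = dim_F V (so x acts on V by a cyclic endomorphism, represented by the companion matrix of p^ℓ in a suitable basis), and every element of A acts on V as a polynomial in the action of x. -/

import Mathlib

open Polynomial


/-- The `F`-linear endomorphism of an `A`-module `V` given by the action of `a ∈ A`. -/
noncomputable def actEnd (F : Type*) {A : Type*} (V : Type*) [CommSemiring F] [Ring A]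
    [Algebra F A] [AddCommGroup V] [Module F V] [Module A V] [IsScalarTower F A V]
    (a : A) : Module.End F V :=
  DistribMulAction.toLinearMap F V a

set_option maxHeartbeats 2000000 in
/-- **Corollary (t1).** Let `F` be a perfect field, `A` a commutative associative unital
`F`-algebra, and `V` a finite-dimensional uniserial `A`-module of composition length
`ℓ`.  Then there is `x ∈ A` such that `V` is a uniserial `F[x]`-module (i.e. `V`,
viewed as an `F[X]`-module via the action of `x`, is uniserial); moreover the minimal
polynomial of the action of `x` on `V` is `p^ℓ` for a monic irreducible `p ∈ F[X]` with
`ℓ·deg p = dim_F V` (so `x` acts by a cyclic endomorphism, the companion matrix of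
`p^ℓ` in a suitable basis), and every `a ∈ A` acts on `V` as a polynomial in the action
of `x`. -/
theorem stmt13 (F : Type*) [Field F] [PerfectField F]
    (A : Type*) [CommRing A] [Algebra F A]
    (V : Type*) [AddCommGroup V] [Module F V] [Module A V] [IsScalarTower F A V]
    [FiniteDimensional F V]
    (huni : Nontrivial V ∧ ∀ W₁ W₂ : Submodule A V, W₁ ≤ W₂ ∨ W₂ ≤ W₁)
    (ℓ : ℕ)
    (hlen : ∃ c : Fin (ℓ + 1) → Submodule A V, c 0 = ⊥ ∧ c (Fin.last ℓ) = ⊤ ∧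
      ∀ i : Fin ℓ, c i.castSucc ⋖ c i.succ) :
    ∃ x : A,
      (∀ W₁ W₂ : Submodule (Polynomial F) (Module.AEval' (actEnd F V x)),
        W₁ ≤ W₂ ∨ W₂ ≤ W₁) ∧
      ∃ p : Polynomial F, p.Monic ∧ Irreducible p ∧
        minpoly F (actEnd F V x) = p ^ ℓ ∧
        ℓ * p.natDegree = Module.finrank F V ∧
        ∀ a : A, ∃ q : Polynomial F,
          actEnd F V a = Polynomial.aeval (actEnd F V x) q := by
  classical
  obtain ⟨hV, hchain⟩ := huni
  obtain ⟨c, hc0, hcl, hcov⟩ := hlen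
  have hl1 : 1 ≤ ℓ := by
    by_contra h
    have hh : ℓ = 0 := by omega
    subst hh
    have : (⊥ : Submodule A V) = ⊤ := by
      rw [← hc0, ← hcl]
      congr 1
    exact absurd this bot_ne_top
  obtain ⟨n, rfl⟩ : ∃ n, ℓ = n + 1 := ⟨ℓ - 1, by omega⟩
  set d : ℕ → Submodule A V := fun i => c ⟨min i (n+1), by omega⟩ with hd
  have hdc : ∀ i, i ≤ n + 1 → ∀ (h : i < n + 2), d i = c ⟨i, h⟩ := by
    intro i hi h
    simp only [hd]
    congr 1
    exact Fin.ext (by simpa using hi)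
  have hd0 : d 0 = ⊥ := by
    rw [hdc 0 (by omega) (by omega), ← hc0]
    congr 1
  have hdtop : ∀ i, n + 1 ≤ i → d i = ⊤ := by
    intro i hi
    have : min i (n+1) = n+1 := by omega
    simp only [hd, this]
    rw [← hcl]
    congr 1
  have hdcov : ∀ i, i < n + 1 → d i ⋖ d (i+1) := by
    intro i hi
    have h1 : d i = c (Fin.castSucc ⟨i, hi⟩) := by
      rw [hdc i (by omega) (by omega)]
      congr 1
    have h2 : d (i+1) = c (Fin.succ ⟨i, hi⟩) := by
      rw [hdc (i+1) (by omega) (by omega)]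
      congr 1
    rw [h1, h2]
    exact hcov ⟨i, hi⟩
  have hdlt : ∀ i, i < n + 1 → d i < d (i+1) := fun i hi => (hdcov i hi).lt
  have hmono : Monotone d := by
    apply monotone_nat_of_le_succ
    intro i
    rcases lt_or_ge i (n+1) with h | h
    · exact (hdlt i h).le
    · rw [hdtop i h, hdtop (i+1) (by omega)]
  have hclass : ∀ W : Submodule A V, ∃ i, i ≤ n + 1 ∧ W = d i := by
    intro W
    by_cases htop : d (n+1) ≤ W
    · exact ⟨n+1, le_rfl, le_antisymm (by rw [hdtop (n+1) le_rfl]; exact le_top) htop⟩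
    · set k := Nat.findGreatest (fun i => d i ≤ W) (n+1) with hk
      have hk0 : d 0 ≤ W := by rw [hd0]; exact bot_le
      have hkW : d k ≤ W := by
        have := Nat.findGreatest_spec (P := fun i => d i ≤ W) (Nat.zero_le (n+1)) hk0
        simpa [← hk] using this
      have hklt : k < n + 1 :=
        lt_of_le_of_ne (Nat.findGreatest_le _) (fun h => htop (h ▸ hkW))
      have hnot : ¬ d (k+1) ≤ W := by
        have := Nat.findGreatest_is_greatest (P := fun i => d i ≤ W) (n := n+1)
          (by omega : Nat.findGreatest (fun i => d i ≤ W) (n+1) < k+1) (by omega)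
        simpa using this
      have hWle : W ≤ d (k+1) := (hchain W (d (k+1))).resolve_right hnot
      rcases (hdcov k hklt).eq_or_eq hkW hWle with h | h
      · exact ⟨k, by omega, h⟩   
      · exact absurd (h ▸ le_rfl) hnot
  have hgen : ∀ j, j < n + 1 → ∀ v : V, v ∈ d (j+1) → v ∉ d j →
      Submodule.span A {v} = d (j+1) := by
    intro j hj v hv hv'
    have h1 : Submodule.span A {v} ≤ d (j+1) := Submodule.span_le.mpr (by simpa)
    have hvm : v ∈ Submodule.span A {v} := Submodule.mem_span_singleton_self v
    have h0 : d j ≤ Submodule.span A {v} :=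
      (hchain (Submodule.span A {v}) (d j)).elim (fun h => absurd (h hvm) hv') id
    rcases (hdcov j hj).eq_or_eq h0 h1 with h | h
    · exact absurd (h ▸ hvm) hv'
    · exact h
  -- generator of V
  have hlast : d n < d (n+1) := hdlt n (by omega)
  obtain ⟨v₀, hv₀top, hv₀⟩ := SetLike.exists_of_lt hlast
  have hspan : Submodule.span A {v₀} = ⊤ := by
    rw [hgen n (by omega) v₀ hv₀top hv₀, hdtop (n+1) le_rfl]
  have hexp : ∀ v : V, ∃ a : A, a • v₀ = v := by
    intro v
    exact Submodule.mem_span_singleton.mp (hspan ▸ Submodule.mem_top)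
  -- the action algebra hom
  set Φ : A →ₐ[F] Module.End F V := Algebra.lsmul F F V with hΦdef
  have hΦ : ∀ (a : A) (v : V), Φ a v = a • v := fun _ _ => rfl
  have hact : ∀ a : A, actEnd F V a = Φ a := fun _ => rfl
  have hsame : ∀ a b : A, a • v₀ = b • v₀ → Φ a = Φ b := by
    intro a b h
    ext v
    obtain ⟨e, rfl⟩ := hexp v
    show a • e • v₀ = b • e • v₀
    rw [← mul_smul, ← mul_smul, mul_comm a e, mul_comm b e, mul_smul, mul_smul, h]
  -- the maximal ideal
  set m : Ideal A := Submodule.comap (LinearMap.toSpanSingleton A V v₀) (d n) with hmdef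
  have hmem : ∀ a : A, a ∈ m ↔ a • v₀ ∈ d n := by
    intro a
    rw [hmdef, Submodule.mem_comap, LinearMap.toSpanSingleton_apply]
  have hunit : ∀ a : A, a ∉ m → ∃ b, Φ (b * a) = 1 := by
    intro a ha
    have h1 : a • v₀ ∈ d (n+1) := by rw [hdtop (n+1) le_rfl]; trivial
    have h2 : a • v₀ ∉ d n := fun h => ha ((hmem a).mpr h)
    have hs := hgen n (by omega) _ h1 h2
    have hv : v₀ ∈ Submodule.span A {a • v₀} := by
      rw [hs, hdtop (n+1) le_rfl]; trivial
    obtain ⟨b, hb⟩ := Submodule.mem_span_singleton.mp hv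
    refine ⟨b, ?_⟩
    have : (b * a) • v₀ = (1 : A) • v₀ := by
      rw [mul_smul, hb, one_smul]
    rw [hsame _ _ this, map_one]
  have hdown : ∀ a ∈ m, ∀ j, j ≤ n → ∀ v ∈ d (j+1), a • v ∈ d j := by
    intro a ha j hj
    obtain ⟨vj, hvj1, hvj0⟩ := SetLike.exists_of_lt (hdlt j (by omega))
    have hvjspan := hgen j (by omega) vj hvj1 hvj0
    have key : a • vj ∈ d j := by
      by_contra hk
      have h1 : a • vj ∈ d (j+1) := (d (j+1)).smul_mem a hvj1
      have hs := hgen j (by omega) _ h1 hk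
      have hvm : vj ∈ Submodule.span A {a • vj} := hs ▸ hvj1
      obtain ⟨b, hb⟩ := Submodule.mem_span_singleton.mp hvm
      have hu : (1 - b * a) ∉ m := by
        intro hmem'
        have hba : (b * a) • v₀ ∈ d n := by
          rw [mul_smul]
          exact (d n).smul_mem b ((hmem a).mp ha)
        have : v₀ ∈ d n := by
          have h3 := (d n).add_mem ((hmem _).mp hmem') hba
          rwa [sub_smul, one_smul, sub_add_cancel] at h3
        exact hv₀ this
      obtain ⟨e, he⟩ := hunit _ hu
      have hz : vj = 0 := by
        have h3 : Φ (e * (1 - b * a)) vj = (1 : Module.End F V) vj := by rw [he]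
        rw [Module.End.one_apply] at h3
        rw [hΦ] at h3
        rw [mul_smul, sub_smul, one_smul, mul_smul, hb, sub_self, smul_zero] at h3
        exact h3.symm
      exact hvj0 (hz ▸ (d j).zero_mem)
    intro v hv
    rw [← hvjspan] at hv
    obtain ⟨e, rfl⟩ := Submodule.mem_span_singleton.mp hv
    rw [← mul_smul, mul_comm, mul_smul]
    exact (d j).smul_mem e key
  -- the element t
  have htex : ∃ t : A, Submodule.span A {t • v₀} = d n ∧ t • v₀ ∈ d n := by
    rcases Nat.eq_zero_or_pos n with h0 | hpos
    · refine ⟨0, ?_, ?_⟩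
      · rw [zero_smul, Submodule.span_zero_singleton, h0, hd0]
      · rw [zero_smul]; exact (d n).zero_mem
    · obtain ⟨k, hk⟩ : ∃ k, n = k + 1 := ⟨n - 1, by omega⟩
      obtain ⟨vn, h1, h2⟩ := SetLike.exists_of_lt (hdlt k (by omega))
      obtain ⟨t, ht⟩ := hexp vn
      refine ⟨t, ?_, ?_⟩
      · rw [ht, hk]; exact hgen k (by omega) vn h1 h2
      · rw [ht, hk]; exact h1
  obtain ⟨t, htspan, htm'⟩ := htex
  have htm : t ∈ m := (hmem t).mpr htm'
  have hmt : ∀ a ∈ m, ∃ b, Φ a = Φ (b * t) := by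
    intro a ha
    have h1 : a • v₀ ∈ Submodule.span A {t • v₀} := htspan ▸ (hmem a).mp ha
    obtain ⟨b, hb⟩ := Submodule.mem_span_singleton.mp h1
    exact ⟨b, hsame _ _ (by rw [mul_smul, hb])⟩
  -- powers of t
  have hpow : ∀ k, k ≤ n + 1 → Submodule.span A {t^k • v₀} = d (n + 1 - k) := by
    intro k
    induction k with
    | zero =>
      intro _
      simpa [hdtop (n+1) le_rfl] using hspan
    | succ k ih =>
      intro hk
      have hk' := ih (by omega)
      have hj : n + 1 - k = (n - k) + 1 := by omega
      set j := n - k with hjdef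
      rw [hj] at hk'
      have hyj : t^k • v₀ ∈ d (j+1) := by
        rw [← hk']; exact Submodule.mem_span_singleton_self _
      have hmem1 : t^(k+1) • v₀ ∈ d j := by
        have h2 := hdown t htm j (by omega) _ hyj
        rwa [← mul_smul, ← pow_succ'] at h2
      have hgoal : n + 1 - (k + 1) = j := by omega
      rw [hgoal]
      rcases Nat.eq_zero_or_pos j with hj0 | hjpos
      · have hz : t^(k+1) • v₀ = 0 := by
          rw [hj0, hd0] at hmem1
          simpa using hmem1
        rw [hz, Submodule.span_zero_singleton, hj0, hd0]
      · obtain ⟨i, hji⟩ : ∃ i, j = i + 1 := ⟨j - 1, by omega⟩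
        rw [hji]
        apply hgen i (by omega) _ (hji ▸ hmem1)
        -- show t^(k+1) • v₀ ∉ d i
        intro hin
        set y := t^k • v₀ with hy
        have hym : y ∉ d j := by
          intro h
          have : Submodule.span A {y} ≤ d j := Submodule.span_le.mpr (by simpa)
          rw [hk'] at this
          exact absurd (lt_of_lt_of_le (hdlt j (by omega)) this) (lt_irrefl _)
        have hty : t • y = t^(k+1) • v₀ := by
          rw [hy, ← mul_smul, ← pow_succ']
        have hmy : ∀ a ∈ m, a • y ∈ d i := by
          intro a ha
          obtain ⟨b, hb⟩ := hmt a ha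
          have h4 : a • y = b • t • y := by
            have := congrArg (fun g : Module.End F V => g y) hb
            simpa [hΦ] using this
          rw [h4, hty]
          exact (d i).smul_mem b hin
        obtain ⟨z, hz1, hz0⟩ := SetLike.exists_of_lt (hdlt i (by omega))
        set π := (d i).mkQ with hπ
        have hπs : Function.Surjective π := Submodule.mkQ_surjective _
        have hQchain : ∀ X Y : Submodule A (V ⧸ d i), X ≤ Y ∨ Y ≤ X := by
          intro X Y
          rcases hchain (X.comap π) (Y.comap π) with h | h
          · left
            rw [← Submodule.map_comap_eq_of_surjective hπs X,
                ← Submodule.map_comap_eq_of_surjective hπs Y]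
            exact Submodule.map_mono h
          · right
            rw [← Submodule.map_comap_eq_of_surjective hπs X,
                ← Submodule.map_comap_eq_of_surjective hπs Y]
            exact Submodule.map_mono h
        have hw₂0 : π z ≠ 0 := by
          rw [hπ, Submodule.mkQ_apply, ne_eq, Submodule.Quotient.mk_eq_zero]
          exact hz0
        have hw₁ : π y ∉ Submodule.span A {π z} := by
          intro hmem2
          have hsub : Submodule.span A {π z} ≤ (d j).map π := by
            rw [Submodule.span_le, Set.singleton_subset_iff]
            exact Submodule.mem_map_of_mem (hji ▸ hz1)
          obtain ⟨z', hz', hzz⟩ := hsub hmem2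
          have hsub2 : z' - y ∈ d i := by
            rw [hπ, Submodule.mkQ_apply, Submodule.mkQ_apply] at hzz
            exact (Submodule.Quotient.eq (d i)).mp hzz
          have : y ∈ d j := by
            have h5 : y = z' - (z' - y) := (sub_sub_cancel z' y).symm
            rw [h5]
            exact (d j).sub_mem hz' (hmono (by omega : i ≤ j) hsub2)
          exact hym this
        rcases hQchain (Submodule.span A {π y}) (Submodule.span A {π z}) with h | h
        · exact hw₁ (h (Submodule.mem_span_singleton_self _))
        · have hw : π z ∈ Submodule.span A {π y} :=
            h (Submodule.mem_span_singleton_self _)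
          obtain ⟨e, he⟩ := Submodule.mem_span_singleton.mp hw
          by_cases hem : e ∈ m
          · have h6 : e • π y = 0 := by
              rw [← map_smul, hπ, Submodule.mkQ_apply, Submodule.Quotient.mk_eq_zero]
              exact hmy e hem
            exact hw₂0 (he ▸ h6)
          · obtain ⟨b, hb⟩ := hunit e hem
            have hby : b • e • y = y := by
              have := congrArg (fun g : Module.End F V => g y) hb
              simpa [hΦ] using this
            have h7 : π y = b • π z := by
              rw [← he, ← map_smul, ← map_smul, hby]
            exact hw₁ (h7 ▸ Submodule.smul_mem _ b (Submodule.mem_span_singleton_self _))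
  -- consequences
  have htl : Φ (t^(n+1)) = 0 := by
    have h1 := hpow (n+1) le_rfl
    have h2 : t^(n+1) • v₀ = 0 := by
      have h3 : t^(n+1) • v₀ ∈ d (n + 1 - (n+1)) := by
        rw [← h1]; exact Submodule.mem_span_singleton_self _
      simp only [Nat.sub_self] at h3
      rw [hd0] at h3
      simpa using h3
    have := hsame (t^(n+1)) 0 (by rw [h2, zero_smul])
    rwa [map_zero] at this
  have htn : Φ (t^n) ≠ 0 := by
    intro h
    have h1 : t^n • v₀ = 0 := by
      have h2 := congrArg (fun g : Module.End F V => g v₀) h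
      simpa only [hΦ, LinearMap.zero_apply] using h2
    have h2 := hpow n (by omega)
    have h3 : n + 1 - n = 1 := by omega
    rw [h1, Submodule.span_zero_singleton, h3] at h2
    have := hdlt 0 (by omega)
    rw [hd0, ← h2] at this
    exact absurd this (lt_irrefl _)
  -- the kernel ideal
  set I : Ideal A := RingHom.ker (Φ.toRingHom) with hI
  have hIm : ∀ a : A, a ∈ I ↔ Φ a = 0 := fun a => RingHom.mem_ker
  have hIm' : ∀ a b : A, a - b ∈ I ↔ Φ a = Φ b := by
    intro a b
    rw [hIm, map_sub, sub_eq_zero]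
  have hIle : I ≤ m := by
    intro a ha
    rw [hmem]
    have : Φ a v₀ = 0 := by rw [(hIm a).mp ha]; rfl
    rw [hΦ] at this
    rw [this]
    exact (d n).zero_mem
  -- m is maximal
  have hmmax : m.IsMaximal := by
    rw [Ideal.isMaximal_iff]
    constructor
    · intro h1
      rw [hmem, one_smul] at h1
      exact hv₀ h1
    · intro J a hmJ ham haJ
      obtain ⟨b, hb⟩ := hunit a ham
      have h1 : 1 - b * a ∈ m := by
        apply hIle
        rw [hIm, map_sub, map_one, hb, sub_self]
      have : (1 : A) = (1 - b * a) + b * a := by ring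
      rw [this]
      exact J.add_mem (hmJ h1) (J.mul_mem_left b haJ)
  haveI := hmmax
  -- residue field
  have hψker : ∀ a : A, ((Submodule.restrictScalars F (d n)).mkQ)
      (((LinearMap.toSpanSingleton A V v₀).restrictScalars F) a) = 0 ↔ a ∈ m := by
    intro a
    rw [Submodule.mkQ_apply, Submodule.Quotient.mk_eq_zero, Submodule.restrictScalars_mem,
      LinearMap.restrictScalars_apply, LinearMap.toSpanSingleton_apply, hmem]
  haveI hfinK : FiniteDimensional F (A ⧸ m) := by
    set ψ : A →ₗ[F] V ⧸ (Submodule.restrictScalars F (d n)) :=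
      (Submodule.restrictScalars F (d n)).mkQ ∘ₗ
        ((LinearMap.toSpanSingleton A V v₀).restrictScalars F) with hψ
    have hker : LinearMap.ker ψ = Submodule.restrictScalars F m := by
      ext a
      rw [LinearMap.mem_ker, Submodule.restrictScalars_mem]
      exact hψker a
    have hinj : Function.Injective
        (Submodule.liftQ (Submodule.restrictScalars F m) ψ (le_of_eq hker.symm)) := by
      rw [← LinearMap.ker_eq_bot]
      exact Submodule.ker_liftQ_eq_bot _ _ _ (le_of_eq hker)
    haveI : FiniteDimensional F (A ⧸ Submodule.restrictScalars F m) :=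
      FiniteDimensional.of_injective _ hinj
    exact Module.Finite.equiv (Submodule.Quotient.restrictScalarsEquiv F m)
  letI : Field (A ⧸ m) := Ideal.Quotient.field m
  haveI : Algebra.IsAlgebraic F (A ⧸ m) := Algebra.IsAlgebraic.of_finite F _
  obtain ⟨α, hα⟩ := Field.exists_primitive_element F (A ⧸ m)
  have hαint : IsIntegral F α := IsIntegral.of_finite F α
  set p : F[X] := minpoly F α with hp
  have hpmonic : p.Monic := minpoly.monic hαint
  have hpirr : Irreducible p := minpoly.irreducible hαint
  have hpsep : p.Separable := PerfectField.separable_of_irreducible hpirr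
  have hp'α : (Polynomial.aeval α) (derivative p) ≠ 0 := by
    intro h
    obtain ⟨u, v, huv⟩ := hpsep
    have := congrArg (Polynomial.aeval α) huv
    rw [map_add, map_mul, map_mul, minpoly.aeval, h, mul_zero, mul_zero, add_zero, map_one]
      at this
    exact zero_ne_one this
  have hmkaeval : ∀ (θ : A) (g : F[X]),
      Ideal.Quotient.mk m (Polynomial.aeval θ g)
        = Polynomial.aeval (Ideal.Quotient.mk m θ) g := by
    intro θ g
    have := Polynomial.aeval_algHom_apply (Ideal.Quotient.mkₐ F m) θ g
    rw [Ideal.Quotient.mkₐ_eq_mk] at this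
    exact this.symm
  have heval : ∀ (g : F[X]) (r : A),
      (g.map (algebraMap F A)).eval r = Polynomial.aeval r g := by
    intro g r
    rw [Polynomial.eval_map, Polynomial.aeval_def]
  have heval' : ∀ (g : F[X]) (r : A),
      (g.map (algebraMap F A)).derivative.eval r = Polynomial.aeval r (derivative g) := by
    intro g r
    rw [Polynomial.derivative_map, Polynomial.eval_map, Polynomial.aeval_def]
  -- the chain of ideals E
  set E : ℕ → Ideal A := fun k => Ideal.span {t^k} ⊔ I with hE
  have htkm : ∀ k, 1 ≤ k → t^k ∈ m := by
    intro k hk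
    obtain ⟨j, rfl⟩ : ∃ j, k = j + 1 := ⟨k - 1, by omega⟩
    rw [pow_succ]
    exact m.mul_mem_left _ htm
  have hEm : ∀ k, 1 ≤ k → E k ≤ m := by
    intro k hk
    rw [hE]
    apply sup_le _ hIle
    rw [Ideal.span_le, Set.singleton_subset_iff]
    exact htkm k hk
  have hmE1 : m ≤ E 1 := by
    intro a ha
    obtain ⟨b, hb⟩ := hmt a ha
    rw [hE]
    apply Submodule.mem_sup.mpr
    refine ⟨b * t, ?_, a - b * t, (hIm' _ _).mpr hb, by ring⟩
    rw [Ideal.mem_span_singleton, pow_one]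
    exact Dvd.intro b (mul_comm t b)
  have hEI : E (n+1) ≤ I := by
    rw [hE]
    apply sup_le _ le_rfl
    rw [Ideal.span_le, Set.singleton_subset_iff]
    exact (hIm _).mpr htl
  have hEmono : ∀ k j, k ≤ j → E j ≤ E k := by
    intro k j hkj
    rw [hE]
    apply sup_le_sup_right
    rw [Ideal.span_le, Set.singleton_subset_iff, SetLike.mem_coe, Ideal.mem_span_singleton]
    exact pow_dvd_pow t hkj
  have hEmul : ∀ j k (a b : A), a ∈ E j → b ∈ E k → a * b ∈ E (j + k) := by
    intro j k a b ha hb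
    rw [hE] at ha hb ⊢
    obtain ⟨y, hy, z, hz, hyz⟩ := Submodule.mem_sup.mp ha
    obtain ⟨y', hy', z', hz', hyz'⟩ := Submodule.mem_sup.mp hb
    obtain ⟨cy, hcy⟩ := Ideal.mem_span_singleton.mp hy
    obtain ⟨cy', hcy'⟩ := Ideal.mem_span_singleton.mp hy'
    apply Submodule.mem_sup.mpr
    refine ⟨t^(j+k) * (cy * cy'), ?_, y * z' + z * b, ?_, ?_⟩
    · rw [Ideal.mem_span_singleton]
      exact Dvd.intro _ rfl
    · exact I.add_mem (I.mul_mem_left y hz') (Ideal.mul_mem_right b I hz)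
    · rw [← hyz, ← hyz', hcy, hcy']
      ring
  -- Newton iteration
  have hNewton : ∀ k : ℕ, ∃ θ : A,
      Ideal.Quotient.mk m θ = α ∧ Polynomial.aeval θ p ∈ E (k + 1) := by
    intro k
    induction k with
    | zero =>
      obtain ⟨θ₀, hθ₀⟩ := Ideal.Quotient.mk_surjective α
      refine ⟨θ₀, hθ₀, hmE1 ?_⟩
      rw [hmem]
      have h1 : Ideal.Quotient.mk m (Polynomial.aeval θ₀ p) = 0 := by
        rw [hmkaeval, hθ₀, minpoly.aeval]
      rw [← hmem]
      exact Ideal.Quotient.eq_zero_iff_mem.mp h1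
    | succ k ih =>
      obtain ⟨θ, hθα, hθp⟩ := ih
      have hp'θ : Polynomial.aeval θ (derivative p) ∉ m := by
        intro hmem3
        apply hp'α
        rw [← hθα, ← hmkaeval, Ideal.Quotient.eq_zero_iff_mem.mpr hmem3]
      obtain ⟨b, hb⟩ := hunit _ hp'θ
      set h := -(Polynomial.aeval θ p * b) with hh
      have hhE : h ∈ E (k+1) := by
        rw [hh]
        exact neg_mem (Ideal.mul_mem_right b _ hθp)
      refine ⟨θ + h, ?_, ?_⟩
      · rw [map_add, hθα, Ideal.Quotient.eq_zero_iff_mem.mpr (hEm (k+1) (by omega) hhE),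
          add_zero]
      · obtain ⟨s, hs⟩ := (p.map (algebraMap F A)).binomExpansion θ h
        rw [heval, heval, heval'] at hs
        rw [hs]
        have hkey : Polynomial.aeval θ p + Polynomial.aeval θ (derivative p) * h + s * h^2
            = Polynomial.aeval θ p * (1 - b * Polynomial.aeval θ (derivative p))
              + s * (h * h) := by
          rw [hh]; ring
        rw [hkey]
        apply Ideal.add_mem
        · have hker2 : 1 - b * Polynomial.aeval θ (derivative p) ∈ I := by
            rw [hIm, map_sub, map_one, hb, sub_self]
          have h9 : Polynomial.aeval θ p * (1 - b * Polynomial.aeval θ (derivative p)) ∈ I :=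
            Ideal.mul_mem_left _ _ hker2
          simp only [hE]
          exact le_sup_right (α := Ideal A) h9
        · exact Ideal.mul_mem_left _ s
            (hEmono (k+2) ((k+1)+(k+1)) (by omega) (hEmul _ _ _ _ hhE hhE))
  obtain ⟨θ, hθα, hθp⟩ := hNewton n
  have hθI : Polynomial.aeval θ p ∈ I := hEI hθp
  have hp'θ : Polynomial.aeval θ (derivative p) ∉ m := by
    intro hmem3
    apply hp'α
    rw [← hθα, ← hmkaeval, Ideal.Quotient.eq_zero_iff_mem.mpr hmem3]
  set x := θ + t with hx
  obtain ⟨s, hs⟩ := (p.map (algebraMap F A)).binomExpansion θ t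
  rw [heval, heval, heval'] at hs
  have hsx : Polynomial.aeval x p
      = Polynomial.aeval θ p + Polynomial.aeval θ (derivative p) * t + s * t^2 := by
    rw [hx]; exact hs
  set w : A := Polynomial.aeval θ (derivative p) + s * t with hw
  have hxw : Polynomial.aeval x p - t * w ∈ I := by
    have h1 : Polynomial.aeval x p - t * w = Polynomial.aeval θ p := by
      rw [hsx, hw]; ring
    rw [h1]; exact hθI
  have hxwΦ : Φ (Polynomial.aeval x p) = Φ (t * w) := (hIm' _ _).mp hxw
  have hwm : w ∉ m := by
    intro hwmem
    apply hp'θ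
    have h1 : Polynomial.aeval θ (derivative p) = w - s * t := by rw [hw]; ring
    rw [h1]
    exact m.sub_mem hwmem (m.mul_mem_left s htm)
  obtain ⟨bw, hbw⟩ := hunit w hwm
  have hfp : ∀ g : F[X], Polynomial.aeval (Φ x) g = Φ (Polynomial.aeval x g) :=
    fun g => Polynomial.aeval_algHom_apply Φ x g
  have hint : IsIntegral F (Φ x) := IsIntegral.of_finite F _
  have hfl : Polynomial.aeval (Φ x) (p^(n+1)) = 0 := by
    rw [map_pow, hfp, hxwΦ, ← map_pow, mul_pow, map_mul, htl, zero_mul]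
  have hfn : Polynomial.aeval (Φ x) (p^n) ≠ 0 := by
    intro h0
    apply htn
    rw [map_pow, hfp, hxwΦ, ← map_pow] at h0
    calc Φ (t^n) = Φ (t^n) * Φ (bw * w) ^ n := by rw [hbw, one_pow, mul_one]
      _ = Φ (t^n * (bw*w)^n) := by rw [← map_pow, ← map_mul]
      _ = Φ (bw^n * (t*w)^n) := congrArg Φ (by rw [mul_pow, mul_pow]; ring)
      _ = Φ (bw^n) * Φ ((t*w)^n) := by rw [map_mul]
      _ = 0 := by rw [h0, mul_zero]
  have hmin : minpoly F (Φ x) = p ^ (n+1) := by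
    have hdvd : minpoly F (Φ x) ∣ p ^ (n+1) := minpoly.dvd F _ hfl
    obtain ⟨i, hile, hass⟩ := (dvd_prime_pow hpirr.prime _).mp hdvd
    have heqi : minpoly F (Φ x) = p ^ i :=
      Polynomial.eq_of_monic_of_associated (minpoly.monic hint) (hpmonic.pow _) hass
    rcases eq_or_lt_of_le hile with hle | hlt
    · rw [heqi, hle]
    · exfalso
      apply hfn
      obtain ⟨r, hr⟩ : minpoly F (Φ x) ∣ p ^ n := heqi ▸ pow_dvd_pow p (by omega)
      rw [hr, map_mul, minpoly.aeval, zero_mul]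
  -- every element of A acts as a polynomial in x
  have hmta : ∀ a ∈ m, ∃ b, a - b * t ∈ I := by
    intro a ha
    obtain ⟨b, hb⟩ := hmt a ha
    exact ⟨b, (hIm' _ _).mpr hb⟩
  have htpx : t - Polynomial.aeval x p * bw ∈ I := by
    rw [hIm']
    calc Φ t = Φ t * Φ (bw * w) := by rw [hbw, mul_one]
      _ = Φ (t * w * bw) := by rw [← map_mul]; exact congrArg Φ (by ring)
      _ = Φ (t * w) * Φ bw := by rw [map_mul]
      _ = Φ (Polynomial.aeval x p) * Φ bw := by rw [hxwΦ]
      _ = Φ (Polynomial.aeval x p * bw) := by rw [map_mul]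
  have hadj : Algebra.adjoin F {α} = ⊤ := by
    have h1 := congrArg IntermediateField.toSubalgebra hα
    rwa [IntermediateField.adjoin_simple_toSubalgebra_of_isAlgebraic hαint.isAlgebraic,
      IntermediateField.top_toSubalgebra] at h1
  have hKrep : ∀ e : A, ∃ g : F[X], e - Polynomial.aeval θ g ∈ m := by
    intro e
    have h2 : Ideal.Quotient.mk m e ∈ (Polynomial.aeval (R := F) α).range := by
      rw [← Algebra.adjoin_singleton_eq_range_aeval, hadj]; trivial
    obtain ⟨g, hg⟩ := h2
    have hg' : Polynomial.aeval α g = Ideal.Quotient.mk m e := hg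
    refine ⟨g, ?_⟩
    rw [← Ideal.Quotient.eq_zero_iff_mem, map_sub, hmkaeval, hθα, hg', sub_self]
  have hθx : ∀ g : F[X], ∃ r : A,
      Polynomial.aeval x g = Polynomial.aeval θ g + r * t := by
    intro g
    have hdvd := Polynomial.sub_dvd_eval_sub x θ (g.map (algebraMap F A))
    rw [heval, heval] at hdvd
    have hxt : x - θ = t := by rw [hx]; ring
    rw [hxt] at hdvd
    obtain ⟨r, hr⟩ := hdvd
    exact ⟨r, by rw [sub_eq_iff_eq_add.mp hr]; ring⟩
  have hstep : ∀ e : A, ∃ (g : F[X]) (c : A),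
      e - (Polynomial.aeval x g + Polynomial.aeval x p * c) ∈ I := by
    intro e
    obtain ⟨g₁, hg₁⟩ := hKrep e
    obtain ⟨bz, hbz⟩ := hmta _ hg₁
    obtain ⟨r, hr⟩ := hθx g₁
    refine ⟨g₁, (bz - r) * bw, ?_⟩
    have key : e - (Polynomial.aeval x g₁ + Polynomial.aeval x p * ((bz - r) * bw))
        = ((e - Polynomial.aeval θ g₁) - bz * t)
          + (bz - r) * (t - Polynomial.aeval x p * bw) := by
      rw [hr]; ring
    rw [key]
    exact I.add_mem hbz (I.mul_mem_left _ htpx)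
  have hmain : ∀ k : ℕ, ∀ a : A, ∃ (g : F[X]) (c : A),
      a - (Polynomial.aeval x g + (Polynomial.aeval x p)^k * c) ∈ I := by
    intro k
    induction k with
    | zero =>
      intro a
      refine ⟨0, a, ?_⟩
      simp
    | succ k ih =>
      intro a
      obtain ⟨g, cc, hgc⟩ := ih a
      obtain ⟨g₁, c', hc'⟩ := hstep cc
      refine ⟨g + p^k * g₁, c', ?_⟩
      have expand : Polynomial.aeval x (g + p^k * g₁)
          = Polynomial.aeval x g + (Polynomial.aeval x p)^k * Polynomial.aeval x g₁ := by
        rw [map_add, map_mul, map_pow]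
      have key : a - (Polynomial.aeval x (g + p^k*g₁) + (Polynomial.aeval x p)^(k+1) * c')
          = (a - (Polynomial.aeval x g + (Polynomial.aeval x p)^k * cc))
            + (Polynomial.aeval x p)^k
              * (cc - (Polynomial.aeval x g₁ + Polynomial.aeval x p * c')) := by
        rw [expand]; ring
      rw [key]
      exact I.add_mem hgc (I.mul_mem_left _ hc')
  have hpoly : ∀ a : A, ∃ g : F[X], Φ a = Polynomial.aeval (Φ x) g := by
    intro a
    obtain ⟨g, cc, hgc⟩ := hmain (n+1) a
    refine ⟨g, ?_⟩
    have h1 := (hIm' _ _).mp hgc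
    have h2 : Φ ((Polynomial.aeval x p)^(n+1)) = 0 := by
      rw [map_pow, ← hfp, ← map_pow, hfl]
    rw [h1, map_add, map_mul, h2, zero_mul, add_zero, hfp]
  -- V is cyclic over F[x]
  have hcyc : ∀ v : V, ∃ g : F[X], (Polynomial.aeval (Φ x) g) v₀ = v := by
    intro v
    obtain ⟨a, rfl⟩ := hexp v
    obtain ⟨g, hg⟩ := hpoly a
    exact ⟨g, by rw [← hg]; rfl⟩
  have hker0 : ∀ g : F[X], (Polynomial.aeval (Φ x) g) v₀ = 0 →
      Polynomial.aeval (Φ x) g = 0 := by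
    intro g h0
    ext v
    obtain ⟨g', hg'⟩ := hcyc v
    rw [← hg', ← Module.End.mul_apply, ← map_mul, mul_comm g g', map_mul,
      Module.End.mul_apply, h0, map_zero, LinearMap.zero_apply]
  have hkeriff : ∀ g : F[X], (Polynomial.aeval (Φ x) g) v₀ = 0 ↔ p^(n+1) ∣ g := by
    intro g
    constructor
    · intro h0
      have h1 := minpoly.dvd F (Φ x) (hker0 g h0)
      rwa [hmin] at h1
    · rintro ⟨r, rfl⟩
      rw [map_mul, hfl, zero_mul, LinearMap.zero_apply]
  set Ψ : F[X] →ₗ[F] V :=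
    { toFun := fun g => (Polynomial.aeval (Φ x) g) v₀
      map_add' := by intro g h; simp
      map_smul' := by intro r g; simp }
    with hΨ
  have hΨsurj : Function.Surjective Ψ := fun v => hcyc v
  have hΨker : LinearMap.ker Ψ = Submodule.restrictScalars F (Ideal.span {p^(n+1)}) := by
    ext g
    rw [LinearMap.mem_ker, Submodule.restrictScalars_mem, Ideal.mem_span_singleton]
    exact hkeriff g
  have hfr1 : Module.finrank F V
      = Module.finrank F (F[X] ⧸ Submodule.restrictScalars F (Ideal.span {p^(n+1)})) := by
    rw [← hΨker]
    exact (LinearEquiv.finrank_eq (Ψ.quotKerEquivOfSurjective hΨsurj)).symm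
  have hfr2 : Module.finrank F (F[X] ⧸ Submodule.restrictScalars F (Ideal.span {p^(n+1)}))
      = Module.finrank F (F[X] ⧸ Ideal.span {p^(n+1)}) :=
    LinearEquiv.finrank_eq (Submodule.Quotient.restrictScalarsEquiv F _)
  have hfr3 : Module.finrank F (F[X] ⧸ Ideal.span {p^(n+1)}) = (n+1) * p.natDegree := by
    have hpne : p^(n+1) ≠ 0 := pow_ne_zero _ hpmonic.ne_zero
    have h4 := (AdjoinRoot.powerBasis (K := F) hpne).finrank
    rw [AdjoinRoot.powerBasis_dim] at h4
    rw [show Module.finrank F (F[X] ⧸ Ideal.span {p^(n+1)})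
        = Module.finrank F (AdjoinRoot (p^(n+1))) from rfl, h4, Polynomial.natDegree_pow]
  -- uniseriality over F[x]
  have huniF : ∀ W₁ W₂ : Submodule F[X] (Module.AEval' (Φ x)), W₁ ≤ W₂ ∨ W₂ ≤ W₁ := by
    have hU : ∀ W : Submodule F[X] (Module.AEval' (Φ x)), ∃ U : Submodule A V,
        ∀ v : V, v ∈ U ↔ Module.AEval'.of (Φ x) v ∈ W := by
      intro W
      refine ⟨{ carrier := {v : V | Module.AEval'.of (Φ x) v ∈ W}
                add_mem' := ?_
                zero_mem' := ?_
                smul_mem' := ?_ }, fun v => Iff.rfl⟩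
      · intro a b ha hb
        simp only [Set.mem_setOf_eq, map_add] at *
        exact W.add_mem ha hb
      · simp only [Set.mem_setOf_eq, map_zero]
        exact W.zero_mem
      · intro a v hv
        simp only [Set.mem_setOf_eq] at *
        obtain ⟨g, hg⟩ := hpoly a
        have h5 : Module.AEval'.of (Φ x) (a • v) = g • Module.AEval'.of (Φ x) v := by
          rw [← Module.AEval.of_aeval_smul]
          congr 1
          show a • v = Polynomial.aeval (Φ x) g • v
          have h6 : Φ a v = Polynomial.aeval (Φ x) g v := by rw [hg]
          exact h6
        rw [h5]
        exact W.smul_mem g hv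
    intro W₁ W₂
    obtain ⟨U₁, hU₁⟩ := hU W₁
    obtain ⟨U₂, hU₂⟩ := hU W₂
    rcases hchain U₁ U₂ with h | h
    · left
      intro u hu
      have h6 := (hU₁ ((Module.AEval'.of (Φ x)).symm u)).mpr
        (by rwa [LinearEquiv.apply_symm_apply])
      have h7 := (hU₂ _).mp (h h6)
      rwa [LinearEquiv.apply_symm_apply] at h7
    · right
      intro u hu
      have h6 := (hU₂ ((Module.AEval'.of (Φ x)).symm u)).mpr
        (by rwa [LinearEquiv.apply_symm_apply])
      have h7 := (hU₁ _).mp (h h6)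
      rwa [LinearEquiv.apply_symm_apply] at h7
  refine ⟨x, ?_, p, hpmonic, hpirr, ?_, ?_, ?_⟩
  · exact huniF
  · exact hmin
  · rw [hfr1, hfr2, hfr3]
  · intro a
    obtain ⟨g, hg⟩ := hpoly a
    exact ⟨g, hg⟩
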